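/- Let X_1, X_2, … be i.i.d. Bernoulli random variables with mean μ ∈ [0,1), and let μ̂_s = (1/s) Σ_{i=1}^s X_i. Then for any x with μ < x ≤ 1 and every horizon T ≥ 1: Σ_{s=1}^T P(μ̂_s > x) ≤ 1 / d(x, μ). -/

import Mathlib

open MeasureTheory ProbabilityTheory Filter Real
open scoped ENNReal

noncomputable section

/-- KL divergence between Bernoulli distributions of means `p` and `q` (real-valued version). -/
def klBern (p q : ℝ) : ℝ :=
  p * Real.log (p / q) + (1 - p) * Real.log ((1 - p) / (1 - q))

/-- KL divergence between Bernoulli distributions of means `p` and `q`, with the conventions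
`d(p,q) = ∞` if `p < 1` and `q ≥ 1`, or if `p > 0` and `q = 0`. -/
def klBernE (p q : ℝ) : ℝ≥0∞ :=
  if (p < 1 ∧ 1 ≤ q) ∨ (0 < p ∧ q = 0) then ⊤ else ENNReal.ofReal (klBern p q)

/-- The Bernoulli law with mean `p`, as a measure on `ℝ`. -/
def bernoulliLaw (p : ℝ) : Measure ℝ :=
  ENNReal.ofReal p • Measure.dirac (1 : ℝ) + ENNReal.ofReal (1 - p) • Measure.dirac (0 : ℝ)

lemma klBern_pos {p q : ℝ} (hq : 0 < q) (hqp : q < p) (hp : p < 1) : 0 < klBern p q := by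
  have hp0 : 0 < p := hq.trans hqp
  have h1p : 0 < 1 - p := by linarith
  have h1q : 0 < 1 - q := by linarith
  have hmem1 : q / p ∈ Set.Ioi (0:ℝ) := Set.mem_Ioi.2 (div_pos hq hp0)
  have hmem2 : (1 - q) / (1 - p) ∈ Set.Ioi (0:ℝ) := Set.mem_Ioi.2 (div_pos h1q h1p)
  have hne : q / p ≠ (1 - q) / (1 - p) := by
    intro h
    rw [div_eq_div_iff hp0.ne' h1p.ne'] at h
    nlinarith
  have key := strictConcaveOn_log_Ioi.2 hmem1 hmem2 hne hp0 h1p (by ring)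
  have harg : p • (q / p) + (1 - p) • ((1 - q) / (1 - p)) = 1 := by
    simp only [smul_eq_mul]
    field_simp
    ring
  rw [harg, Real.log_one] at key
  have h1 : Real.log (p / q) = Real.log p - Real.log q := Real.log_div hp0.ne' hq.ne'
  have h2 : Real.log (q / p) = Real.log q - Real.log p := Real.log_div hq.ne' hp0.ne'
  have h3 : Real.log ((1 - p) / (1 - q)) = Real.log (1 - p) - Real.log (1 - q) :=
    Real.log_div h1p.ne' h1q.ne'
  have h4 : Real.log ((1 - q) / (1 - p)) = Real.log (1 - q) - Real.log (1 - p) :=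
    Real.log_div h1q.ne' h1p.ne'
  simp only [smul_eq_mul, h2, h4] at key
  unfold klBern
  rw [h1, h3]
  nlinarith

/-- **Lemma (Chernoff-type maximal bound).** If `X_1, X_2, …` are i.i.d. Bernoulli with mean
`μ ∈ [0,1)` and `μ̂_s = (Σ_{i=1}^s X_i)/s`, then for any `x` with `μ < x ≤ 1` and any horizon
`T ≥ 1`, `Σ_{s=1}^T P(μ̂_s > x) ≤ 1 / d(x, μ)`. -/
theorem sum_prob_empMean_gt_le {Ω : Type*} [MeasurableSpace Ω]
    (P : Measure Ω) [IsProbabilityMeasure P]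
    (μ : ℝ) (hμ0 : 0 ≤ μ) (hμ1 : μ < 1)
    (X : ℕ → Ω → ℝ) (hmeas : ∀ i, Measurable (X i))
    (hlaw : ∀ i, P.map (X i) = bernoulliLaw μ)
    (hindep : iIndepFun (m := fun _ : ℕ => (inferInstance : MeasurableSpace ℝ)) X P)
    (x : ℝ) (hx1 : μ < x) (hx2 : x ≤ 1) (T : ℕ) (hT : 1 ≤ T) :
    ∑ s ∈ Finset.Icc 1 T,
        P {ω | x < (∑ i ∈ Finset.Icc 1 s, X i ω) / (s : ℝ)} ≤ 1 / klBernE x μ := by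
  -- null sets under the Bernoulli law
  have hnull : ∀ (A : Set ℝ), MeasurableSet A → bernoulliLaw μ A = 0 → ∀ i,
      ∀ᵐ ω ∂P, X i ω ∉ A := by
    intro A hA h0 i
    have : P (X i ⁻¹' A) = 0 := by
      rw [← Measure.map_apply (hmeas i) hA, hlaw i, h0]
    rw [ae_iff]
    simpa [Set.preimage] using this
  rcases eq_or_lt_of_le hμ0 with hμ0' | hμ0'
  · -- μ = 0 : each X i = 0 a.s., so every event is null
    have hx0 : 0 < x := by linarith [hμ0'.le]
    have hae : ∀ i, ∀ᵐ ω ∂P, X i ω = 0 := by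
      intro i
      have h0 : bernoulliLaw μ ({(0:ℝ)}ᶜ) = 0 := by
        simp [bernoulliLaw, ← hμ0', Measure.dirac_apply' _ (measurableSet_singleton (0:ℝ)).compl]
      filter_upwards [hnull _ (measurableSet_singleton (0:ℝ)).compl h0 i] with ω hω
      simpa using hω
    have hterm : ∀ s ∈ Finset.Icc 1 T,
        P {ω | x < (∑ i ∈ Finset.Icc 1 s, X i ω) / (s : ℝ)} = 0 := by
      intro s _
      have hae' : ∀ᵐ ω ∂P, ¬ (x < (∑ i ∈ Finset.Icc 1 s, X i ω) / (s : ℝ)) := by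
        have := (ae_all_iff.2 fun i : ℕ => hae i)
        filter_upwards [this] with ω hω
        have : (∑ i ∈ Finset.Icc 1 s, X i ω) = 0 := Finset.sum_eq_zero fun i _ => hω i
        rw [this]
        simp [not_lt]
        positivity
      have := ae_iff.mp hae'
      simpa using this
    rw [Finset.sum_eq_zero hterm]
    exact zero_le
  · -- 0 < μ
    have hae01 : ∀ i, ∀ᵐ ω ∂P, X i ω = 0 ∨ X i ω = 1 := by
      intro i
      have hA : MeasurableSet ({(0:ℝ), 1} : Set ℝ)ᶜ :=
        (Set.Finite.measurableSet (by simp)).compl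
      have h0 : bernoulliLaw μ ({(0:ℝ), 1} : Set ℝ)ᶜ = 0 := by
        simp [bernoulliLaw, Measure.dirac_apply' _ hA, Set.indicator_apply]
      filter_upwards [hnull _ hA h0 i] with ω hω
      simpa [Set.mem_compl_iff, not_or] using not_not.mp (by simpa using hω)
    rcases eq_or_lt_of_le hx2 with hx2' | hx2'
    · -- x = 1 : events are a.s. empty
      have hterm : ∀ s ∈ Finset.Icc 1 T,
          P {ω | x < (∑ i ∈ Finset.Icc 1 s, X i ω) / (s : ℝ)} = 0 := by
        intro s hs
        have hs1 : 1 ≤ s := (Finset.mem_Icc.mp hs).1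
        have hae' : ∀ᵐ ω ∂P, ¬ (x < (∑ i ∈ Finset.Icc 1 s, X i ω) / (s : ℝ)) := by
          filter_upwards [ae_all_iff.2 fun i : ℕ => hae01 i] with ω hω
          have hsum : (∑ i ∈ Finset.Icc 1 s, X i ω) ≤ s := by
            calc (∑ i ∈ Finset.Icc 1 s, X i ω) ≤ ∑ i ∈ Finset.Icc 1 s, 1 := by
                  apply Finset.sum_le_sum
                  intro i _
                  rcases hω i with h | h <;> rw [h] <;> norm_num
              _ = s := by simp [Nat.card_Icc]
          have hspos : (0:ℝ) < s := by exact_mod_cast hs1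
          rw [not_lt, hx2']
          rw [div_le_one hspos]
          linarith
        have := ae_iff.mp hae'
        simpa using this
      rw [Finset.sum_eq_zero hterm]
      exact zero_le
    · -- main case : 0 < μ < x < 1
      have h1x : 0 < 1 - x := by linarith
      have h1μ : 0 < 1 - μ := by linarith
      have hx0 : 0 < x := lt_trans hμ0' hx1
      set d : ℝ := klBern x μ with hd_def
      have hd : 0 < d := klBern_pos hμ0' hx1 hx2'
      set t : ℝ := Real.log (x * (1 - μ) / (μ * (1 - x))) with ht_def
      have hratio : 1 < x * (1 - μ) / (μ * (1 - x)) := by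
        rw [lt_div_iff₀ (by positivity)]
        nlinarith
      have ht_pos : 0 < t := Real.log_pos hratio
      have het : Real.exp t = x * (1 - μ) / (μ * (1 - x)) :=
        Real.exp_log (by positivity)
      -- the moment generating function of each X i
      have hmgf : ∀ i, mgf (X i) P t = μ * Real.exp t + (1 - μ) := by
        intro i
        have hsm : StronglyMeasurable fun y : ℝ => Real.exp (t * y) :=
          (continuous_exp.comp (continuous_const.mul continuous_id)).stronglyMeasurable
        have : mgf (X i) P t = ∫ y, Real.exp (t * y) ∂(P.map (X i)) := by
          rw [integral_map (hmeas i).aemeasurable hsm.aestronglyMeasurable]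
          rfl
        rw [this, hlaw i]
        unfold bernoulliLaw
        have hint1 : Integrable (fun y : ℝ => Real.exp (t * y))
            (ENNReal.ofReal μ • Measure.dirac (1:ℝ)) :=
          ((integrable_const _).congr (ae_eq_dirac _).symm).smul_measure (by simp)
        have hint0 : Integrable (fun y : ℝ => Real.exp (t * y))
            (ENNReal.ofReal (1 - μ) • Measure.dirac (0:ℝ)) :=
          ((integrable_const _).congr (ae_eq_dirac _).symm).smul_measure (by simp)
        rw [integral_add_measure hint1 hint0, integral_smul_measure, integral_smul_measure,
          integral_dirac, integral_dirac, ENNReal.toReal_ofReal hμ0,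
          ENNReal.toReal_ofReal h1μ.le]
        simp [smul_eq_mul, mul_one, mul_zero, Real.exp_zero]
      have hmgf_val : μ * Real.exp t + (1 - μ) = (1 - μ) / (1 - x) := by
        rw [het]
        field_simp
        ring
      -- key per-step identity
      have hkey : Real.exp (-t * x) * (μ * Real.exp t + (1 - μ)) = Real.exp (-d) := by
        rw [hmgf_val]
        have : (1 - μ) / (1 - x) = Real.exp (Real.log ((1 - μ) / (1 - x))) :=
          (Real.exp_log (by positivity)).symm
        rw [this, ← Real.exp_add]
        congr 1
        have ht_eq : t = Real.log x + Real.log (1 - μ) - (Real.log μ + Real.log (1 - x)) := by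
          rw [ht_def, Real.log_div (by positivity) (by positivity),
            Real.log_mul hx0.ne' h1μ.ne', Real.log_mul hμ0'.ne' h1x.ne']
        have hlog1 : Real.log ((1 - μ) / (1 - x)) = Real.log (1 - μ) - Real.log (1 - x) :=
          Real.log_div h1μ.ne' h1x.ne'
        have hlog2 : Real.log (x / μ) = Real.log x - Real.log μ :=
          Real.log_div hx0.ne' hμ0'.ne'
        have hlog3 : Real.log ((1 - x) / (1 - μ)) = Real.log (1 - x) - Real.log (1 - μ) :=
          Real.log_div h1x.ne' h1μ.ne'
        rw [hlog1, ht_eq, hd_def]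
        unfold klBern
        rw [hlog2, hlog3]
        ring
      set r : ℝ := Real.exp (-d) with hr_def
      have hr0 : 0 < r := Real.exp_pos _
      have hr1 : r < 1 := Real.exp_lt_one_iff.mpr (by linarith)
      -- integrability
      have hint : ∀ i : ℕ, Integrable (fun ω => Real.exp (t * X i ω)) P := by
        intro i
        refine Integrable.mono' (integrable_const (Real.exp |t|))
          (((hmeas i).const_mul t).exp.aestronglyMeasurable) ?_
        filter_upwards [hae01 i] with ω hω
        rw [Real.norm_eq_abs, Real.abs_exp]
        apply Real.exp_le_exp.mpr
        rcases hω with h | h <;> rw [h] <;>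
          simp [abs_nonneg, le_abs_self]
      -- the per-s Chernoff bound
      have hstep : ∀ s, 1 ≤ s →
          (P {ω | x < (∑ i ∈ Finset.Icc 1 s, X i ω) / (s : ℝ)}).toReal ≤ r ^ s := by
        intro s hs1
        have hspos : (0:ℝ) < s := by exact_mod_cast hs1
        set S : Ω → ℝ := ∑ i ∈ Finset.Icc 1 s, X i with hS_def
        have hS_apply : ∀ ω, S ω = ∑ i ∈ Finset.Icc 1 s, X i ω := by
          intro ω; simp [hS_def]
        have hsub : {ω | x < (∑ i ∈ Finset.Icc 1 s, X i ω) / (s : ℝ)} ⊆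
            {ω | (s : ℝ) * x ≤ S ω} := by
          intro ω hω
          simp only [Set.mem_setOf_eq] at hω ⊢
          rw [hS_apply]
          rw [lt_div_iff₀ hspos] at hω
          linarith
        have hSint : Integrable (fun ω => Real.exp (t * S ω)) P := by
          have := hindep.integrable_exp_mul_sum (t := t) hmeas
            (s := Finset.Icc 1 s) (fun i _ => hint i)
          exact this
        have hch := measure_ge_le_exp_mul_mgf (μ := P) (X := S) ((s:ℝ) * x) ht_pos.le hSint
        have hmgfS : mgf S P t = (μ * Real.exp t + (1 - μ)) ^ s := by
          rw [hS_def, hindep.mgf_sum hmeas (Finset.Icc 1 s)]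
          rw [Finset.prod_congr rfl fun i _ => hmgf i, Finset.prod_const, Nat.card_Icc]
          norm_num
        calc (P {ω | x < (∑ i ∈ Finset.Icc 1 s, X i ω) / (s : ℝ)}).toReal
            ≤ (P {ω | (s:ℝ) * x ≤ S ω}).toReal :=
              ENNReal.toReal_mono (measure_ne_top _ _) (measure_mono hsub)
          _ ≤ Real.exp (-t * ((s:ℝ) * x)) * mgf S P t := hch
          _ = (Real.exp (-t * x) * (μ * Real.exp t + (1 - μ))) ^ s := by
              rw [hmgfS, mul_pow, ← Real.exp_nat_mul]
              ring_nf
          _ = r ^ s := by rw [hkey]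
      -- sum the geometric series
      have hgeom : ∑ s ∈ Finset.Icc 1 T, r ^ s ≤ 1 / d := by
        have h1 : ∑ s ∈ Finset.Icc 1 T, r ^ s = r * ∑ s ∈ Finset.range T, r ^ s := by
          rw [← Finset.Ico_add_one_right_eq_Icc, Finset.sum_Ico_eq_sum_range, Finset.mul_sum]
          apply Finset.sum_congr (by norm_num)
          intro i _
          rw [pow_add, pow_one]
        have h2 : ∑ s ∈ Finset.range T, r ^ s ≤ 1 / (1 - r) := by
          rw [geom_sum_eq hr1.ne T]
          have hne : r - 1 ≠ 0 := by linarith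
          have h1r : (0:ℝ) < 1 - r := by linarith
          have heq : (r ^ T - 1) / (r - 1) = (1 - r ^ T) / (1 - r) := by
            rw [div_eq_div_iff hne (by linarith : (1:ℝ) - r ≠ 0)]; ring
          rw [heq, div_le_div_iff₀ h1r h1r]
          nlinarith [pow_pos hr0 T]
        have h3 : r * (1 / (1 - r)) ≤ 1 / d := by
          rw [mul_one_div, div_le_div_iff₀ (by linarith) hd]
          have hexp : d + 1 ≤ Real.exp d := Real.add_one_le_exp d
          have hre : r * Real.exp d = 1 := by
            rw [hr_def, ← Real.exp_add]; simp
          nlinarith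
        calc ∑ s ∈ Finset.Icc 1 T, r ^ s = r * ∑ s ∈ Finset.range T, r ^ s := h1
          _ ≤ r * (1 / (1 - r)) := by
              apply mul_le_mul_of_nonneg_left h2 hr0.le
          _ ≤ 1 / d := h3
      -- put everything together in ℝ≥0∞
      have hklE : klBernE x μ = ENNReal.ofReal d := by
        unfold klBernE
        rw [if_neg]
        push_neg
        constructor
        · intro _; linarith
        · intro _; linarith
      rw [hklE, ← ENNReal.ofReal_one, ← ENNReal.ofReal_div_of_pos hd]
      have hsum_eq : ∑ s ∈ Finset.Icc 1 T,
          P {ω | x < (∑ i ∈ Finset.Icc 1 s, X i ω) / (s : ℝ)} =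
          ENNReal.ofReal (∑ s ∈ Finset.Icc 1 T,
            (P {ω | x < (∑ i ∈ Finset.Icc 1 s, X i ω) / (s : ℝ)}).toReal) := by
        rw [ENNReal.ofReal_sum_of_nonneg fun s _ => ENNReal.toReal_nonneg]
        exact Finset.sum_congr rfl fun s _ =>
          (ENNReal.ofReal_toReal (measure_ne_top _ _)).symm
      rw [hsum_eq]
      apply ENNReal.ofReal_le_ofReal
      calc ∑ s ∈ Finset.Icc 1 T,
            (P {ω | x < (∑ i ∈ Finset.Icc 1 s, X i ω) / (s : ℝ)}).toReal
          ≤ ∑ s ∈ Finset.Icc 1 T, r ^ s := by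
            apply Finset.sum_le_sum
            intro s hs
            exact hstep s (Finset.mem_Icc.mp hs).1
        _ ≤ 1 / d := hgeom

end
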